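/- Let G = (V,E) be a graph and for each v ∈ V let φ_v(z) = a_v·z + b_v be a linear function. If the vertices are ordered in non-increasing order of the slopes a_v, then this ordering minimizes ∑_{v∈V} φ_v(⃖d(v)) over all vertex orderings, and the minimum value equals ∑_{uv∈E} min(a_u, a_v) + ∑_{v∈V} b_v. -/

import Mathlib

open Finset

/-- A finite loop-free multigraph: edges indexed by `E`, each with two distinct endpoints. -/
structure Multigraph (V E : Type) where
  fst : E → V
  snd : E → V
  loopless : ∀ e, fst e ≠ snd e

namespace Multigraph

variable {V E : Type} [Fintype V] [DecidableEq V] [Fintype E] [DecidableEq E]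

/-- Head of edge `e` under orientation `o`. -/
def head (G : Multigraph V E) (o : E → Bool) (e : E) : V :=
  if o e then G.fst e else G.snd e

/-- Tail of edge `e` under orientation `o`. -/
def tail (G : Multigraph V E) (o : E → Bool) (e : E) : V :=
  if o e then G.snd e else G.fst e

/-- Indegree of `v` under orientation `o`. -/
def indeg (G : Multigraph V E) (o : E → Bool) (v : V) : ℕ :=
  (Finset.univ.filter (fun e => G.head o e = v)).card

/-- The orientation `o` contains a directed cycle (a closed directed trail). -/
def HasDicycle (G : Multigraph V E) (o : E → Bool) : Prop :=
  ∃ k : ℕ, ∃ hk : 0 < k, ∃ f : Fin k → E, Function.Injective f ∧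
    ∀ i : Fin k, G.head o (f i) = G.tail o (f ⟨(i.val + 1) % k, Nat.mod_lt _ hk⟩)

/-- The orientation `o` is acyclic. -/
def Acyclic (G : Multigraph V E) (o : E → Bool) : Prop := ¬ G.HasDicycle o

/-- Left-degree of `v` in the vertex ordering `σ`. -/
def leftDeg (G : Multigraph V E) (σ : V ≃ Fin (Fintype.card V)) (v : V) : ℕ :=
  (Finset.univ.filter (fun e =>
    (G.fst e = v ∧ σ (G.snd e) < σ v) ∨ (G.snd e = v ∧ σ (G.fst e) < σ v))).card

/-- Right-degree of `v` in the vertex ordering `σ`. -/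
def rightDeg (G : Multigraph V E) (σ : V ≃ Fin (Fintype.card V)) (v : V) : ℕ :=
  (Finset.univ.filter (fun e =>
    (G.fst e = v ∧ σ v < σ (G.snd e)) ∨ (G.snd e = v ∧ σ v < σ (G.fst e)))).card

/-- Degree of `v` in the subgraph induced by `S`. -/
def degIn (G : Multigraph V E) (S : Finset V) (v : V) : ℕ :=
  (Finset.univ.filter (fun e =>
    (G.fst e = v ∨ G.snd e = v) ∧ G.fst e ∈ S ∧ G.snd e ∈ S)).card

/-- Degree of `v` in `G`. -/
def deg (G : Multigraph V E) (v : V) : ℕ :=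
  (Finset.univ.filter (fun e => G.fst e = v ∨ G.snd e = v)).card

/-- The set of vertices appearing at or before `v` in the ordering `σ`. -/
def prefixSet (σ : V ≃ Fin (Fintype.card V)) (v : V) : Finset V :=
  Finset.univ.filter (fun u => σ u ≤ σ v)

end Multigraph

open Multigraph

variable {V E : Type} [Fintype V] [DecidableEq V] [Fintype E] [DecidableEq E]


/-- The later endpoint of edge `e` in ordering `σ`. -/
def laterEnd (G : Multigraph V E) (σ : V ≃ Fin (Fintype.card V)) (e : E) : V :=
  if σ (G.fst e) < σ (G.snd e) then G.snd e else G.fst e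

lemma laterEnd_mem (G : Multigraph V E) (σ : V ≃ Fin (Fintype.card V)) (e : E) :
    laterEnd G σ e = G.fst e ∨ laterEnd G σ e = G.snd e := by
  unfold laterEnd; split <;> simp

lemma sum_leftDeg_eq (G : Multigraph V E) (a : V → ℝ) (σ : V ≃ Fin (Fintype.card V)) :
    ∑ v : V, a v * (G.leftDeg σ v : ℝ) = ∑ e : E, a (laterEnd G σ e) := by
  have h : ∀ v, a v * (G.leftDeg σ v : ℝ) =
      ∑ e : E, if (G.fst e = v ∧ σ (G.snd e) < σ v) ∨ (G.snd e = v ∧ σ (G.fst e) < σ v)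
        then a v else 0 := by
    intro v
    rw [← Finset.sum_filter, Finset.sum_const, Multigraph.leftDeg,
      nsmul_eq_mul, mul_comm]
  simp only [h]
  rw [Finset.sum_comm]
  refine Finset.sum_congr rfl fun e _ => ?_
  have hne : σ (G.fst e) ≠ σ (G.snd e) := fun h =>
    G.loopless e (σ.injective h)
  rw [← Finset.sum_filter]
  have hfil : Finset.univ.filter (fun v =>
      (G.fst e = v ∧ σ (G.snd e) < σ v) ∨ (G.snd e = v ∧ σ (G.fst e) < σ v)) =
      {laterEnd G σ e} := by
    ext v
    simp only [Finset.mem_filter, Finset.mem_univ, true_and, Finset.mem_singleton]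
    unfold laterEnd
    rcases lt_or_gt_of_ne hne with hlt | hgt
    · rw [if_pos hlt]
      constructor
      · rintro (⟨rfl, h2⟩ | ⟨rfl, _⟩)
        · exact absurd (hlt.trans h2) (lt_irrefl _)
        · rfl
      · rintro rfl; exact Or.inr ⟨rfl, hlt⟩
    · rw [if_neg (not_lt_of_gt hgt)]
      constructor
      · rintro (⟨rfl, _⟩ | ⟨rfl, h2⟩)
        · rfl
        · exact absurd (hgt.trans h2) (lt_irrefl _)
      · rintro rfl; exact Or.inl ⟨rfl, hgt⟩
  rw [hfil, Finset.sum_singleton]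

/-- Ordering vertices by non-increasing slope minimizes `∑ (a_v ⋅ leftdeg v + b_v)`,
and the minimum equals `∑_{uv ∈ E} min(a_u, a_v) + ∑_v b_v`. -/
theorem linear_objective_min (G : Multigraph V E) (a b : V → ℝ)
    (σ : V ≃ Fin (Fintype.card V))
    (hσ : ∀ u v : V, σ u < σ v → a v ≤ a u) :
    (∀ σ' : V ≃ Fin (Fintype.card V),
      ∑ v : V, (a v * (G.leftDeg σ v : ℝ) + b v) ≤
        ∑ v : V, (a v * (G.leftDeg σ' v : ℝ) + b v)) ∧
    ∑ v : V, (a v * (G.leftDeg σ v : ℝ) + b v) =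
      (∑ e : E, min (a (G.fst e)) (a (G.snd e))) + ∑ v : V, b v := by
  have key : ∀ σ' : V ≃ Fin (Fintype.card V),
      ∑ v : V, (a v * (G.leftDeg σ' v : ℝ) + b v) =
        (∑ e : E, a (laterEnd G σ' e)) + ∑ v : V, b v := by
    intro σ'
    rw [Finset.sum_add_distrib, sum_leftDeg_eq]
  constructor
  · intro σ'
    rw [key σ, key σ']
    refine add_le_add ?_ le_rfl
    apply Finset.sum_le_sum
    intro e _
    have h1 : a (laterEnd G σ e) = min (a (G.fst e)) (a (G.snd e)) := by
      unfold laterEnd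
      split
      · exact (min_eq_right (hσ _ _ (by assumption))).symm
      · rename_i h
        have hne : σ (G.fst e) ≠ σ (G.snd e) := fun hh => G.loopless e (σ.injective hh)
        have : σ (G.snd e) < σ (G.fst e) := lt_of_le_of_ne (not_lt.mp h) hne.symm
        exact (min_eq_left (hσ _ _ this)).symm
    rw [h1]
    rcases laterEnd_mem G σ' e with h | h <;> rw [h]
    · exact min_le_left _ _
    · exact min_le_right _ _
  · rw [key σ]
    congr 1
    refine Finset.sum_congr rfl fun e _ => ?_
    unfold laterEnd
    split
    · exact (min_eq_right (hσ _ _ (by assumption))).symm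
    · rename_i h
      have hne : σ (G.fst e) ≠ σ (G.snd e) := fun hh => G.loopless e (σ.injective hh)
      have : σ (G.snd e) < σ (G.fst e) := lt_of_le_of_ne (not_lt.mp h) hne.symm
      exact (min_eq_left (hσ _ _ this)).symm
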